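/- (Theorem 2.3) Let H, J, K be 4×4 real matrices satisfying the Hamiltonian conditions H² = J² = K² = HJK = −E, with associated block map P. Let A ∈ ℍ^{m×m} be a nonzero quaternion matrix with rank(P(A)) = 4n for some n with 1 ≤ n ≤ m. Then there exist injective maps r, c : {1,…,n} → {1,…,m} such that the n×n submatrix B = (a_{r(s) c(t)})_{1≤s,t≤n} of A satisfies rank(P(B)) = 4n. -/

import Mathlib

open Matrix

/-- The real `4×4` matrix representation of a quaternion determined by matrices
`H, J, K` (assumed to satisfy the Hamiltonian conditions). -/
noncomputable def qRep (H J K : Matrix (Fin 4) (Fin 4) ℝ) (q : Quaternion ℝ) :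
    Matrix (Fin 4) (Fin 4) ℝ :=
  q.re • (1 : Matrix (Fin 4) (Fin 4) ℝ) + q.imI • H + q.imJ • J + q.imK • K

/-- The block real matrix representation of a quaternion matrix: the `(s,t)` block
of `pRep H J K A` is `qRep H J K (A s t)`. -/
noncomputable def pRep (H J K : Matrix (Fin 4) (Fin 4) ℝ) {m n : ℕ}
    (A : Matrix (Fin m) (Fin n) (Quaternion ℝ)) :
    Matrix (Fin m × Fin 4) (Fin n × Fin 4) ℝ :=
  Matrix.of fun p q => qRep H J K (A p.1 q.1) p.2 q.2

/-! ### Auxiliary material -/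

open Module Submodule

section Products
variable {H J K : Matrix (Fin 4) (Fin 4) ℝ}
  (hH : H * H = -1) (hJ : J * J = -1) (hK : K * K = -1) (hHJK : H * J * K = -1)

include hK hHJK in
lemma aux_hHJ : H * J = K := by
  calc H * J = H * J * (K * -K) := by rw [mul_neg, hK]; simp
  _ = (H * J * K) * -K := by noncomm_ring
  _ = K := by rw [hHJK]; simp

include hH hHJK in
lemma aux_hJK : J * K = H := by
  calc J * K = (-(H*H)) * (J * K) := by rw [hH]; simp
  _ = -H * (H * J * K) := by noncomm_ring
  _ = H := by rw [hHJK]; simp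

include hH hJ hK hHJK in
lemma aux_hJH : J * H = -K := by
  have h1 : H * J = K := aux_hHJ hK hHJK
  have h2 : J * K = H := aux_hJK hH hHJK
  calc J * H = J * (J * K) := by rw [h2]
  _ = (J * J) * K := by noncomm_ring
  _ = -K := by rw [hJ]; simp

include hH hK hHJK in
lemma aux_hHK : H * K = -J := by
  have h1 : H * J = K := aux_hHJ ‹_› ‹_›
  calc H * K = H * (H * J) := by rw [h1]
  _ = (H * H) * J := by noncomm_ring
  _ = -J := by rw [hH]; simp

include hJ hK hHJK in
lemma aux_hKJ : K * J = -H := by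
  have h1 : H * J = K := aux_hHJ ‹_› ‹_›
  calc K * J = H * (J * J) := by rw [← h1]; noncomm_ring
  _ = -H := by rw [hJ]; simp

include hH hJ hK hHJK in
lemma aux_hKH : K * H = J := by
  have h2 : J * K = H := aux_hJK hH hHJK
  calc K * H = K * (J * K) := by rw [h2]
  _ = (K * J) * K := by noncomm_ring
  _ = -H * K := by rw [aux_hKJ hJ hK hHJK]
  _ = J := by rw [neg_mul, aux_hHK hH hK hHJK]; exact neg_neg J
end Products

section QRep
variable {H J K : Matrix (Fin 4) (Fin 4) ℝ}

lemma qRep_one : qRep H J K 1 = 1 := by simp [qRep, Quaternion.re_one, Quaternion.imI_one, Quaternion.imJ_one, Quaternion.imK_one]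

lemma qRep_add (p q : Quaternion ℝ) : qRep H J K (p+q) = qRep H J K p + qRep H J K q := by
  simp [qRep]; module

lemma qRep_smul (r : ℝ) (q : Quaternion ℝ) : qRep H J K (r • q) = r • qRep H J K q := by
  simp [qRep, Quaternion.re_smul, Quaternion.imI_smul, Quaternion.imJ_smul, Quaternion.imK_smul]
  module

variable (hH : H * H = -1) (hJ : J * J = -1) (hK : K * K = -1) (hHJK : H * J * K = -1)

include hH hJ hK hHJK in
lemma qRep_mul (p q : Quaternion ℝ) :
    qRep H J K (p * q) = qRep H J K p * qRep H J K q := by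
  have hHJ' := aux_hHJ hK hHJK
  have hJK' := aux_hJK hH hHJK
  have hJH' := aux_hJH hH hJ hK hHJK
  have hHK' := aux_hHK hH hK hHJK
  have hKJ' := aux_hKJ hJ hK hHJK
  have hKH' := aux_hKH hH hJ hK hHJK
  simp only [qRep, Quaternion.re_mul, Quaternion.imI_mul, Quaternion.imJ_mul, Quaternion.imK_mul,
    add_mul, mul_add, smul_mul_assoc, mul_smul_comm, hH, hJ, hK, hHJ', hJH', hJK', hKJ', hKH',
    hHK', mul_one, one_mul, smul_smul, smul_neg]
  module

variable (H J K) in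
/-- `x ↦ qRep x *ᵥ e₀` as a linear map. -/
noncomputable def phiMap : Quaternion ℝ →ₗ[ℝ] (Fin 4 → ℝ) where
  toFun x := (qRep H J K x).mulVec (Pi.single 0 1)
  map_add' p q := by simp only [qRep_add, Matrix.add_mulVec]
  map_smul' r q := by simp only [qRep_smul, RingHom.id_apply, Matrix.smul_mulVec]

variable (H J K) in
/-- `x ↦ e₀ ᵥ* qRep x` as a linear map. -/
noncomputable def psiMap : Quaternion ℝ →ₗ[ℝ] (Fin 4 → ℝ) where
  toFun x := Matrix.vecMul (Pi.single 0 1) (qRep H J K x)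
  map_add' p q := by simp only [qRep_add, Matrix.vecMul_add]
  map_smul' r q := by
    simp only [qRep_smul, RingHom.id_apply]
    funext j
    simp [Matrix.vecMul, dotProduct, Finset.mul_sum, mul_comm, mul_left_comm,
      Pi.single_apply, Finset.sum_ite_eq, Finset.sum_ite_eq']

variable (hmul : ∀ p q : Quaternion ℝ, qRep H J K (p * q) = qRep H J K p * qRep H J K q)

include hmul in
lemma phiMap_mul (a x : Quaternion ℝ) :
    phiMap H J K (a * x) = (qRep H J K a).mulVec (phiMap H J K x) := by
  simp only [phiMap, LinearMap.coe_mk, AddHom.coe_mk, hmul, Matrix.mulVec_mulVec]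

include hmul in
lemma psiMap_mul (x a : Quaternion ℝ) :
    psiMap H J K (x * a) = Matrix.vecMul (psiMap H J K x) (qRep H J K a) := by
  simp only [psiMap, LinearMap.coe_mk, AddHom.coe_mk, hmul, Matrix.vecMul_vecMul]

include hmul in
lemma phiMap_inj : Function.Injective (phiMap H J K) := by
  rw [injective_iff_map_eq_zero]
  intro x hx
  by_contra h
  have h1 : phiMap H J K (x⁻¹ * x) = 0 := by rw [phiMap_mul hmul, hx, Matrix.mulVec_zero]
  rw [inv_mul_cancel₀ h] at h1
  have h2 : phiMap H J K 1 = Pi.single 0 1 := by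
    show (qRep H J K 1) *ᵥ _ = _
    rw [qRep_one, Matrix.one_mulVec]
  rw [h2] at h1
  have := congrFun h1 0
  simp at this

include hmul in
lemma psiMap_inj : Function.Injective (psiMap H J K) := by
  rw [injective_iff_map_eq_zero]
  intro x hx
  by_contra h
  have h1 : psiMap H J K (x * x⁻¹) = 0 := by rw [psiMap_mul hmul, hx, Matrix.zero_vecMul]
  rw [mul_inv_cancel₀ h] at h1
  have h2 : psiMap H J K 1 = Pi.single 0 1 := by
    show Matrix.vecMul _ (qRep H J K 1) = _
    rw [qRep_one, Matrix.vecMul_one]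
  rw [h2] at h1
  have := congrFun h1 0
  simp at this

variable (H J K) in
noncomputable def phiEquiv (hmul : ∀ p q : Quaternion ℝ,
    qRep H J K (p * q) = qRep H J K p * qRep H J K q) : Quaternion ℝ ≃ₗ[ℝ] (Fin 4 → ℝ) :=
  LinearMap.linearEquivOfInjective (phiMap H J K) (phiMap_inj hmul)
    (by rw [Quaternion.finrank_eq_four, finrank_pi]; simp)

variable (H J K) in
noncomputable def psiEquiv (hmul : ∀ p q : Quaternion ℝ,
    qRep H J K (p * q) = qRep H J K p * qRep H J K q) : Quaternion ℝ ≃ₗ[ℝ] (Fin 4 → ℝ) :=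
  LinearMap.linearEquivOfInjective (psiMap H J K) (psiMap_inj hmul)
    (by rw [Quaternion.finrank_eq_four, finrank_pi]; simp)

end QRep

/-! ### Restricting scalars of spans -/

lemma span_restrict_eq {D V : Type} [DivisionRing D] [Algebra ℝ D] [AddCommGroup V]
    [Module ℝ V] [Module D V] [IsScalarTower ℝ D V] [SMulCommClass ℝ D V]
    (S : Set V) (hS : ∀ (q : D), ∀ x ∈ S, q • x ∈ span ℝ S) :
    (span D S).restrictScalars ℝ = span ℝ S := by
  apply le_antisymm
  · intro x hx
    simp only [restrictScalars_mem] at hx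
    induction hx using span_induction with
    | mem x h => exact subset_span h
    | zero => exact zero_mem _
    | add x y _ _ hx hy => exact add_mem hx hy
    | smul q x hxS hx =>
        clear hxS
        induction hx using span_induction with
        | mem y hy => exact hS q y hy
        | zero => rw [smul_zero]; exact zero_mem _
        | add y z _ _ h1 h2 => rw [smul_add]; exact add_mem h1 h2
        | smul r y _ h => rw [smul_comm]; exact Submodule.smul_mem _ r h
  · rw [span_le]
    intro x hx
    simpa using subset_span (R := D) hx
open Module Submodule Set in
lemma main_selection {D V : Type} [DivisionRing D] [Algebra ℝ D]
    [FiniteDimensional ℝ D] (hD4 : Module.finrank ℝ D = 4)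
    [AddCommGroup V] [Module ℝ V] [Module D V]
    [IsScalarTower ℝ D V] [SMulCommClass ℝ D V] [FiniteDimensional ℝ V]
    {m n : ℕ} (g : Fin m → Fin 4 → V)
    (hstab : ∀ (q : D) (t : Fin m) (j : Fin 4), q • g t j ∈ span ℝ (Set.range (g t)))
    (hrank : finrank ℝ (span ℝ (Set.range (fun p : Fin m × Fin 4 => g p.1 p.2))) = 4 * n) :
    ∃ c : Fin n → Fin m, Function.Injective c ∧
      span ℝ (Set.range (fun p : Fin n × Fin 4 => g (c p.1) p.2)) =
        span ℝ (Set.range (fun p : Fin m × Fin 4 => g p.1 p.2)) := by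
  classical
  haveI : FiniteDimensional D V := Module.Finite.right ℝ D V
  -- ranges over products are unions of block ranges
  have hUnion : ∀ {k : ℕ} (f : Fin k → Fin m),
      Set.range (fun p : Fin k × Fin 4 => g (f p.1) p.2) = ⋃ i, Set.range (g (f i)) := by
    intro k f; ext x
    constructor
    · rintro ⟨⟨i, j⟩, rfl⟩; exact Set.mem_iUnion.2 ⟨i, ⟨j, rfl⟩⟩
    · intro hx
      obtain ⟨i, j, rfl⟩ := by simpa [Set.mem_iUnion] using hx
      exact ⟨(i, j), rfl⟩
  -- closure of unions of blocks under the D-action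
  have hclos : ∀ {k : ℕ} (f : Fin k → Fin m) (q : D), ∀ x ∈ ⋃ i, Set.range (g (f i)),
      q • x ∈ span ℝ (⋃ i, Set.range (g (f i))) := by
    intro k f q x hx
    obtain ⟨i, hi⟩ := Set.mem_iUnion.1 hx
    obtain ⟨j, rfl⟩ := hi
    exact span_mono (Set.subset_iUnion (fun i => Set.range (g (f i))) i) (hstab q (f i) j)
  have hUnionAll : Set.range (fun p : Fin m × Fin 4 => g p.1 p.2) = ⋃ t, Set.range (g t) := by
    ext x
    constructor
    · rintro ⟨⟨i, j⟩, rfl⟩; exact Set.mem_iUnion.2 ⟨i, ⟨j, rfl⟩⟩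
    · intro hx
      obtain ⟨i, j, rfl⟩ := by simpa [Set.mem_iUnion] using hx
      exact ⟨(i, j), rfl⟩
  have hclosAll : ∀ (q : D), ∀ x ∈ ⋃ t, Set.range (g t),
      q • x ∈ span ℝ (⋃ t, Set.range (g t)) := by
    intro q x hx
    obtain ⟨i, hi⟩ := Set.mem_iUnion.1 hx
    obtain ⟨j, rfl⟩ := hi
    exact span_mono (Set.subset_iUnion (fun t => Set.range (g t)) i) (hstab q i j)
  -- the block submodules
  set W : Fin m → Submodule D V := fun t => span D (Set.range (g t)) with hWdef
  have hWres : ∀ t, (W t).restrictScalars ℝ = span ℝ (Set.range (g t)) := fun t =>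
    span_restrict_eq _ (fun q x hx => by obtain ⟨j, rfl⟩ := hx; exact hstab q t j)
  have hWfr : ∀ t, 4 * finrank D (W t) ≤ 4 := by
    intro t
    have h1 : finrank ℝ ((W t).restrictScalars ℝ) = finrank ℝ (W t) :=
      ((Submodule.restrictScalarsEquiv ℝ D V (W t)).restrictScalars ℝ).finrank_eq
    have h2 : finrank ℝ D * finrank D (W t) = finrank ℝ (W t) :=
      Module.finrank_mul_finrank ℝ D (W t)
    have h3 : finrank ℝ (span ℝ (Set.range (g t))) ≤ 4 := by
      refine (finrank_span_le_card _).trans ?_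
      have := Fintype.card_range_le (g t)
      rw [Set.toFinset_card]
      simpa using this
    rw [hWres t] at h1
    rw [hD4] at h2
    omega
  have hWone : ∀ t, finrank D (W t) ≤ 1 := fun t => by have := hWfr t; omega
  -- generators
  have hgen : ∀ t, ∃ v : V, W t = span D {v} := by
    intro t
    by_cases hbot : W t = ⊥
    · exact ⟨0, by rw [hbot]; simp⟩
    · obtain ⟨v, hv, hv0⟩ := Submodule.exists_mem_ne_zero_of_ne_bot hbot
      refine ⟨v, (Submodule.eq_of_le_of_finrank_le ?_ ?_).symm⟩
      · rw [span_le, Set.singleton_subset_iff]; exact hv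
      · rw [finrank_span_singleton hv0]; exact hWone t
  choose w hw using hgen
  -- the total span
  set U : Submodule D V := span D (Set.range (fun p : Fin m × Fin 4 => g p.1 p.2)) with hUdef
  have hUres : U.restrictScalars ℝ = span ℝ (Set.range (fun p : Fin m × Fin 4 => g p.1 p.2)) :=
    span_restrict_eq _ (fun q x hx => by
      rw [hUnionAll] at *
      exact hclosAll q x hx)
  have hUw : U = span D (Set.range w) := by
    rw [hUdef, hUnionAll, span_iUnion]
    rw [span_range_eq_iSup]
    exact iSup_congr fun t => (hw t)
  have hUfr : finrank D U = n := by
    have h1 : finrank ℝ (U.restrictScalars ℝ) = finrank ℝ U :=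
      ((Submodule.restrictScalarsEquiv ℝ D V U).restrictScalars ℝ).finrank_eq
    have h2 : finrank ℝ D * finrank D U = finrank ℝ U := Module.finrank_mul_finrank ℝ D U
    rw [hUres] at h1
    rw [hD4] at h2
    rw [hrank] at h1
    omega
  -- select a basis among the generators
  obtain ⟨b, hbsub, hbspan, hbli⟩ := exists_linearIndependent D (Set.range w)
  have hbfin : b.Finite := (Set.finite_range w).subset hbsub
  haveI := hbfin.fintype
  have hbcard : Fintype.card b = n := by
    have := finrank_span_set_eq_card hbli
    rw [hbspan, ← hUw, hUfr] at this
    rw [← Set.toFinset_card, ← this]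
  have e : Fin n ≃ b := (Fintype.equivFinOfCardEq hbcard).symm
  have hpre : ∀ i : Fin n, ∃ t, w t = (e i : V) := fun i => hbsub (e i).2
  choose c hc using hpre
  refine ⟨c, ?_, ?_⟩
  · intro i i' hii
    have : (e i : V) = (e i' : V) := by rw [← hc i, ← hc i', hii]
    exact e.injective (Subtype.ext this)
  · -- the selected span equals the full span
    have hwc : Set.range (fun i => w (c i)) = b := by
      ext x
      constructor
      · rintro ⟨i, rfl⟩; show w (c i) ∈ b; rw [hc i]; exact (e i).2
      · intro hx
        obtain ⟨i, hi⟩ := e.surjective ⟨x, hx⟩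
        exact ⟨i, by show w (c i) = x; rw [hc i, hi]⟩
    have hsel : span D (Set.range (fun p : Fin n × Fin 4 => g (c p.1) p.2)) = U := by
      rw [hUnion c, span_iUnion]
      have : ∀ i, W (c i) = span D {w (c i)} := fun i => hw (c i)
      calc ⨆ i, span D (Set.range (g (c i))) = ⨆ i, span D {w (c i)} :=
            iSup_congr fun i => hw (c i)
        _ = span D (Set.range (fun i => w (c i))) := (span_range_eq_iSup).symm
        _ = span D b := by rw [hwc]
        _ = U := by rw [hbspan, ← hUw]
    have hselres : (span D (Set.range (fun p : Fin n × Fin 4 => g (c p.1) p.2))).restrictScalars ℝ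
        = span ℝ (Set.range (fun p : Fin n × Fin 4 => g (c p.1) p.2)) :=
      span_restrict_eq _ (fun q x hx => by
        rw [hUnion c] at *
        exact hclos c q x hx)
    rw [← hselres, hsel, hUres]
-- block equivalence
noncomputable def blockEquiv (φ : Quaternion ℝ ≃ₗ[ℝ] (Fin 4 → ℝ)) (m : ℕ) :
    ((Fin m × Fin 4) → ℝ) ≃ₗ[ℝ] (Fin m → Quaternion ℝ) where
  toFun v s := φ.symm (fun i => v (s, i))
  invFun u p := φ (u p.1) p.2
  map_add' v w := by
    funext s
    show φ.symm (fun i => (v + w) (s, i)) = _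
    rw [show (fun i => (v + w) (s, i)) = (fun i => v (s, i)) + (fun i => w (s, i)) from rfl,
      map_add]
    rfl
  map_smul' r v := by
    funext s
    show φ.symm (fun i => (r • v) (s, i)) = _
    rw [show (fun i => (r • v) (s, i)) = r • (fun i => v (s, i)) from rfl, _root_.map_smul]
    rfl
  left_inv v := by
    funext p
    show φ (φ.symm fun i => v (p.1, i)) p.2 = v p
    rw [φ.apply_symm_apply]
  right_inv u := by
    funext s
    show φ.symm (fun i => φ (u s) i) = u s
    rw [show (fun i => φ (u s) i) = φ (u s) from rfl, φ.symm_apply_apply]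

lemma finrank_span_range_equiv {V W : Type} [AddCommGroup V] [Module ℝ V] [AddCommGroup W]
    [Module ℝ W] (e : V ≃ₗ[ℝ] W) {ι : Type} (f : ι → V) :
    finrank ℝ (span ℝ (Set.range (fun i => e (f i)))) = finrank ℝ (span ℝ (Set.range f)) := by
  rw [show Set.range (fun i => e (f i)) = e '' Set.range f by rw [← Set.range_comp]; rfl,
    ← LinearEquiv.coe_coe, ← Submodule.map_span]
  exact LinearEquiv.finrank_map_eq e _

lemma span_range_single_top : span ℝ (Set.range (fun j : Fin 4 => Pi.single j (1:ℝ))) = ⊤ := by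
  rw [eq_top_iff]
  intro v _
  rw [pi_eq_sum_univ v]
  exact Submodule.sum_mem _ fun j _ => Submodule.smul_mem _ _ (subset_span ⟨j, by funext k; simp [Pi.single_apply, eq_comm]⟩)

lemma span_range_equiv_single_top (φ : Quaternion ℝ ≃ₗ[ℝ] (Fin 4 → ℝ)) :
    span ℝ (Set.range (fun j : Fin 4 => φ.symm (Pi.single j (1:ℝ)))) = ⊤ := by
  rw [show Set.range (fun j : Fin 4 => φ.symm (Pi.single j (1:ℝ)))
      = φ.symm '' Set.range (fun j : Fin 4 => Pi.single j (1:ℝ)) by rw [← Set.range_comp]; rfl,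
    ← LinearEquiv.coe_coe, ← Submodule.map_span, span_range_single_top, Submodule.map_top]
  exact LinearEquiv.range φ.symm

section RankFormulas
variable {H J K : Matrix (Fin 4) (Fin 4) ℝ}
  (hmul : ∀ p q : Quaternion ℝ, qRep H J K (p * q) = qRep H J K p * qRep H J K q)

include hmul in
/-- The rank of `pRep A` as the dimension of the span of the transported columns. -/
lemma rank_pRep_eq_col {m k : ℕ} (A : Matrix (Fin m) (Fin k) (Quaternion ℝ)) :
    (pRep H J K A).rank = finrank ℝ (span ℝ (Set.range
      (fun p : Fin k × Fin 4 =>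
        fun s => A s p.1 * (phiEquiv H J K hmul).symm (Pi.single p.2 1)))) := by
  rw [Matrix.rank_eq_finrank_span_cols, show (pRep H J K A).col = (pRep H J K A)ᵀ from rfl,
    ← finrank_span_range_equiv (blockEquiv (phiEquiv H J K hmul) m)
      (fun p : Fin k × Fin 4 => (pRep H J K A)ᵀ p)]
  have hfun : (fun p : Fin k × Fin 4 => blockEquiv (phiEquiv H J K hmul) m ((pRep H J K A)ᵀ p))
      = fun p : Fin k × Fin 4 =>
        (fun s => A s p.1 * (phiEquiv H J K hmul).symm (Pi.single p.2 1)) := by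
    funext p
    funext s
    show (phiEquiv H J K hmul).symm (fun i => qRep H J K (A s p.1) i p.2)
      = A s p.1 * (phiEquiv H J K hmul).symm (Pi.single p.2 1)
    have h1 : (fun i => qRep H J K (A s p.1) i p.2)
        = (qRep H J K (A s p.1)) *ᵥ Pi.single p.2 1 := by
      funext i; simp
    rw [h1]
    have h4 : qRep H J K (A s p.1) *ᵥ Pi.single p.2 1
        = phiEquiv H J K hmul (A s p.1 * (phiEquiv H J K hmul).symm (Pi.single p.2 1)) := by
      rw [show ∀ y, phiEquiv H J K hmul y = phiMap H J K y from fun _ => rfl, phiMap_mul hmul]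
      exact congrArg (fun v => qRep H J K (A s p.1) *ᵥ v)
        (LinearEquiv.apply_symm_apply (phiEquiv H J K hmul) (Pi.single p.2 1)).symm
    rw [h4, LinearEquiv.symm_apply_apply]
  rw [hfun]

include hmul in
/-- The rank of `pRep A` as the dimension of the span of the transported rows. -/
lemma rank_pRep_eq_row {k n' : ℕ} (A : Matrix (Fin k) (Fin n') (Quaternion ℝ)) :
    (pRep H J K A).rank = finrank ℝ (span ℝ (Set.range
      (fun p : Fin k × Fin 4 =>
        fun t => (psiEquiv H J K hmul).symm (Pi.single p.2 1) * A p.1 t))) := by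
  rw [← Matrix.rank_transpose, Matrix.rank_eq_finrank_span_cols,
    show (pRep H J K A)ᵀ.col = (pRep H J K A)ᵀᵀ from rfl, Matrix.transpose_transpose,
    ← finrank_span_range_equiv (blockEquiv (psiEquiv H J K hmul) n')
      (fun p : Fin k × Fin 4 => pRep H J K A p)]
  have hfun : (fun p : Fin k × Fin 4 => blockEquiv (psiEquiv H J K hmul) n' (pRep H J K A p))
      = fun p : Fin k × Fin 4 =>
        (fun t => (psiEquiv H J K hmul).symm (Pi.single p.2 1) * A p.1 t) := by
    funext p
    funext t
    show (psiEquiv H J K hmul).symm (fun j => qRep H J K (A p.1 t) p.2 j)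
      = (psiEquiv H J K hmul).symm (Pi.single p.2 1) * A p.1 t
    have h1 : (fun j => qRep H J K (A p.1 t) p.2 j)
        = Matrix.vecMul (Pi.single p.2 1) (qRep H J K (A p.1 t)) := by
      funext j; simp
    rw [h1]
    have h4 : Pi.single p.2 1 ᵥ* qRep H J K (A p.1 t)
        = psiEquiv H J K hmul ((psiEquiv H J K hmul).symm (Pi.single p.2 1) * A p.1 t) := by
      rw [show ∀ y, psiEquiv H J K hmul y = psiMap H J K y from fun _ => rfl, psiMap_mul hmul]
      exact congrArg (fun v => v ᵥ* qRep H J K (A p.1 t))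
        (LinearEquiv.apply_symm_apply (psiEquiv H J K hmul) (Pi.single p.2 1)).symm
    rw [h4, LinearEquiv.symm_apply_apply]
  rw [hfun]

end RankFormulas

section Selection
variable {H J K : Matrix (Fin 4) (Fin 4) ℝ}
  (hmul : ∀ p q : Quaternion ℝ, qRep H J K (p * q) = qRep H J K p * qRep H J K q)

include hmul in
/-- Column selection: a quaternion matrix whose `pRep` has rank `4n` has `n` columns whose
`pRep` still has rank `4n`. -/
lemma col_selection {m k n : ℕ} (A : Matrix (Fin m) (Fin k) (Quaternion ℝ))
    (hr : (pRep H J K A).rank = 4 * n) :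
    ∃ c : Fin n → Fin k, Function.Injective c ∧
      (pRep H J K (A.submatrix id c)).rank = 4 * n := by
  classical
  have hD4 : finrank ℝ (Quaternion ℝ)ᵐᵒᵖ = 4 := by
    rw [← (MulOpposite.opLinearEquiv (R := ℝ) (M := Quaternion ℝ)).finrank_eq]
    exact Quaternion.finrank_eq_four
  have hstab : ∀ (q : (Quaternion ℝ)ᵐᵒᵖ) (t : Fin k) (j : Fin 4),
      q • (fun t j (s : Fin m) => A s t * (phiEquiv H J K hmul).symm (Pi.single j 1)) t j ∈
        span ℝ (Set.range ((fun t j (s : Fin m) =>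
          A s t * (phiEquiv H J K hmul).symm (Pi.single j 1)) t)) := by
    intro q t j
    set L : Quaternion ℝ →ₗ[ℝ] (Fin m → Quaternion ℝ) :=
      { toFun := fun y s => A s t * y
        map_add' := fun y z => by funext s; simp [mul_add]
        map_smul' := fun r y => by funext s; simp [mul_smul_comm] } with hL
    have hrange : span ℝ (Set.range ((fun t j (s : Fin m) =>
        A s t * (phiEquiv H J K hmul).symm (Pi.single j 1)) t)) = LinearMap.range L := by
      have h1 : Set.range ((fun t j (s : Fin m) =>
          A s t * (phiEquiv H J K hmul).symm (Pi.single j 1)) t)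
          = L '' Set.range (fun j : Fin 4 => (phiEquiv H J K hmul).symm (Pi.single j 1)) := by
        rw [← Set.range_comp]; rfl
      rw [h1, ← Submodule.map_span, span_range_equiv_single_top (phiEquiv H J K hmul),
        Submodule.map_top]
    rw [hrange]
    refine ⟨(phiEquiv H J K hmul).symm (Pi.single j 1) * MulOpposite.unop q, ?_⟩
    funext s
    show A s t * ((phiEquiv H J K hmul).symm (Pi.single j 1) * MulOpposite.unop q)
      = (A s t * (phiEquiv H J K hmul).symm (Pi.single j 1)) * MulOpposite.unop q
    rw [mul_assoc]
  have hrank' : finrank ℝ (span ℝ (Set.range (fun p : Fin k × Fin 4 =>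
      (fun t j (s : Fin m) => A s t * (phiEquiv H J K hmul).symm (Pi.single j 1)) p.1 p.2)))
      = 4 * n := (rank_pRep_eq_col hmul A).symm.trans hr
  obtain ⟨c, hcinj, hspan⟩ := main_selection (D := (Quaternion ℝ)ᵐᵒᵖ) hD4
    (fun t j (s : Fin m) => A s t * (phiEquiv H J K hmul).symm (Pi.single j 1)) hstab hrank'
  refine ⟨c, hcinj, ?_⟩
  calc (pRep H J K (A.submatrix id c)).rank
      = finrank ℝ (span ℝ (Set.range (fun p : Fin n × Fin 4 =>
          fun s => A.submatrix id c s p.1 * (phiEquiv H J K hmul).symm (Pi.single p.2 1)))) :=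
        rank_pRep_eq_col hmul _
    _ = 4 * n := by
        have heq : (fun p : Fin n × Fin 4 =>
            fun s => A.submatrix id c s p.1 * (phiEquiv H J K hmul).symm (Pi.single p.2 1))
            = fun p : Fin n × Fin 4 => (fun t j (s : Fin m) =>
              A s t * (phiEquiv H J K hmul).symm (Pi.single j 1)) (c p.1) p.2 := rfl
        rw [heq, hspan]
        exact hrank'

include hmul in
/-- Row selection: a quaternion matrix whose `pRep` has rank `4n` has `n` rows whose
`pRep` still has rank `4n`. -/
lemma row_selection {k n' n : ℕ} (A : Matrix (Fin k) (Fin n') (Quaternion ℝ))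
    (hr : (pRep H J K A).rank = 4 * n) :
    ∃ r : Fin n → Fin k, Function.Injective r ∧
      (pRep H J K (A.submatrix r id)).rank = 4 * n := by
  classical
  have hD4 : finrank ℝ (Quaternion ℝ) = 4 := Quaternion.finrank_eq_four
  have hstab : ∀ (q : Quaternion ℝ) (s : Fin k) (i : Fin 4),
      q • (fun s i (t : Fin n') => (psiEquiv H J K hmul).symm (Pi.single i 1) * A s t) s i ∈
        span ℝ (Set.range ((fun s i (t : Fin n') =>
          (psiEquiv H J K hmul).symm (Pi.single i 1) * A s t) s)) := by
    intro q s i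
    set L : Quaternion ℝ →ₗ[ℝ] (Fin n' → Quaternion ℝ) :=
      { toFun := fun y t => y * A s t
        map_add' := fun y z => by funext t; simp [add_mul]
        map_smul' := fun r y => by funext t; simp [smul_mul_assoc] } with hL
    have hrange : span ℝ (Set.range ((fun s i (t : Fin n') =>
        (psiEquiv H J K hmul).symm (Pi.single i 1) * A s t) s)) = LinearMap.range L := by
      have h1 : Set.range ((fun s i (t : Fin n') =>
          (psiEquiv H J K hmul).symm (Pi.single i 1) * A s t) s)
          = L '' Set.range (fun i : Fin 4 => (psiEquiv H J K hmul).symm (Pi.single i 1)) := by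
        rw [← Set.range_comp]; rfl
      rw [h1, ← Submodule.map_span, span_range_equiv_single_top (psiEquiv H J K hmul),
        Submodule.map_top]
    rw [hrange]
    refine ⟨q * (psiEquiv H J K hmul).symm (Pi.single i 1), ?_⟩
    funext t
    show (q * (psiEquiv H J K hmul).symm (Pi.single i 1)) * A s t
      = q * ((psiEquiv H J K hmul).symm (Pi.single i 1) * A s t)
    rw [mul_assoc]
  have hrank' : finrank ℝ (span ℝ (Set.range (fun p : Fin k × Fin 4 =>
      (fun s i (t : Fin n') => (psiEquiv H J K hmul).symm (Pi.single i 1) * A s t) p.1 p.2)))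
      = 4 * n := (rank_pRep_eq_row hmul A).symm.trans hr
  obtain ⟨r, hrinj, hspan⟩ := main_selection (D := Quaternion ℝ) hD4
    (fun s i (t : Fin n') => (psiEquiv H J K hmul).symm (Pi.single i 1) * A s t) hstab hrank'
  refine ⟨r, hrinj, ?_⟩
  calc (pRep H J K (A.submatrix r id)).rank
      = finrank ℝ (span ℝ (Set.range (fun p : Fin n × Fin 4 =>
          fun t => (psiEquiv H J K hmul).symm (Pi.single p.2 1) * A.submatrix r id p.1 t))) :=
        rank_pRep_eq_row hmul _
    _ = 4 * n := by
        have heq : (fun p : Fin n × Fin 4 =>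
            fun t => (psiEquiv H J K hmul).symm (Pi.single p.2 1) * A.submatrix r id p.1 t)
            = fun p : Fin n × Fin 4 => (fun s i (t : Fin n') =>
              (psiEquiv H J K hmul).symm (Pi.single i 1) * A s t) (r p.1) p.2 := rfl
        rw [heq, hspan]
        exact hrank'

end Selection

/-- Theorem 2.3: if `A ∈ ℍ^{m×m}` is nonzero and `rank P(A) = 4n`
with `1 ≤ n ≤ m`, then `A` has an `n × n` submatrix `B` with `rank P(B) = 4n`. -/
theorem pRep_submatrix_rank (H J K : Matrix (Fin 4) (Fin 4) ℝ)
    (hH : H * H = -1) (hJ : J * J = -1) (hK : K * K = -1)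
    (hHJK : H * J * K = -1) {m n : ℕ} (hn : 1 ≤ n) (hnm : n ≤ m)
    (A : Matrix (Fin m) (Fin m) (Quaternion ℝ)) (hA : A ≠ 0)
    (hrank : (pRep H J K A).rank = 4 * n) :
    ∃ r c : Fin n → Fin m, Function.Injective r ∧ Function.Injective c ∧
      (pRep H J K (A.submatrix r c)).rank = 4 * n := by
  have hmul : ∀ p q : Quaternion ℝ, qRep H J K (p * q) = qRep H J K p * qRep H J K q :=
    qRep_mul hH hJ hK hHJK
  obtain ⟨c, hcinj, hcr⟩ := col_selection hmul A hrank
  obtain ⟨r, hrinj, hrr⟩ := row_selection hmul (A.submatrix id c) hcr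
  refine ⟨r, c, hrinj, hcinj, ?_⟩
  rwa [Matrix.submatrix_submatrix, Function.comp_id, Function.id_comp] at hrr
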